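/- Every element of the kernel of D on k[x,s,t,u,v] has constant term plus an element of the ideal (x,s); that is, ker D ⊆ k ⊕ (x,s)·k[x,s,t,u,v]. Equivalently, every element of ker D with zero constant term lies in the ideal generated by x and s. -/

import Mathlib

open MvPolynomial


set_option linter.unusedSectionVars false
namespace DF

variable {K : Type*} [Field K] [CharZero K]

abbrev M (K : Type*) := ℤ → ℤ → ℤ → ℤ → K

/-- coefficient operator of `s ∂ₜ + t ∂ᵤ` -/
def E (h : M K) : M K := fun j a b e =>
  ((a:K)+1) * h (j-1) (a+1) b e + ((b:K)+1) * h j (a-1) (b+1) e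

/-- coefficient operator of `2t ∂ₛ + 2u ∂ₜ` -/
def F (h : M K) : M K := fun j a b e =>
  2*((j:K)+1) * h (j+1) (a-1) b e + 2*((a:K)+1) * h j (a+1) (b-1) e

/-- weight operator -/
def Hw (h : M K) : M K := fun j a b e => ((j:K) - (b:K)) * h j a b e

/-- projection to weight level `l` -/
def P (l : ℤ) (h : M K) : M K := fun j a b e => if j - b = l then h j a b e else 0

def Dt (h : M K) : M K := fun j a b e => ((a:K)+1) * h j (a+1) b e
def Du (h : M K) : M K := fun j a b e => ((b:K)+1) * h j a (b+1) e
def Dv (h : M K) : M K := fun j a b e => ((e:K)+1) * h j a b (e+1)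
def Ds (h : M K) : M K := fun j a b e => ((j:K)+1) * h (j+1) a b e

def VN (h : M K) : Prop := ∀ j a b e : ℤ, (j < 0 ∨ a < 0 ∨ b < 0 ∨ e < 0) → h j a b e = 0
def Bdd (C : ℤ) (h : M K) : Prop := ∀ j a b e : ℤ, C ≤ j + a + b → h j a b e = 0

lemma E_add (h g : M K) : E (h + g) = E h + E g := by
  funext j a b e; simp only [E, Pi.add_apply]; ring

lemma E_smul (c : K) (h : M K) : E (c • h) = c • E h := by
  funext j a b e; simp only [E, Pi.smul_apply, smul_eq_mul]; ring

lemma E_zero : E (0 : M K) = 0 := by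
  funext j a b e; simp [E]

lemma F_zero : F (0 : M K) = 0 := by
  funext j a b e; simp [F]

lemma iter_E_zero (n : ℕ) : E^[n] (0 : M K) = 0 := Function.iterate_fixed E_zero n

lemma iter_E_add (n : ℕ) (h g : M K) : E^[n] (h + g) = E^[n] h + E^[n] g := by
  induction n with
  | zero => simp
  | succ n ih => simp only [Function.iterate_succ_apply', ih, E_add]

lemma iter_E_smul (n : ℕ) (c : K) (h : M K) : E^[n] (c • h) = c • E^[n] h := by
  induction n with
  | zero => simp
  | succ n ih => simp only [Function.iterate_succ_apply', ih, E_smul]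

lemma E_P (l : ℤ) (h : M K) : E (P l h) = P (l+1) (E h) := by
  funext j a b e
  simp only [E, P]
  by_cases hc : j - b = l + 1
  · rw [if_pos (by omega : j - 1 - b = l), if_pos (by omega : j - (b+1) = l), if_pos hc]
  · rw [if_neg (by omega : ¬(j - 1 - b = l)), if_neg (by omega : ¬(j - (b+1) = l)), if_neg hc]
    ring

lemma F_P (l : ℤ) (h : M K) : F (P l h) = P (l-1) (F h) := by
  funext j a b e
  simp only [F, P]
  by_cases hc : j - b = l - 1
  · rw [if_pos (by omega : j + 1 - b = l), if_pos (by omega : j - (b-1) = l), if_pos hc]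
  · rw [if_neg (by omega : ¬(j + 1 - b = l)), if_neg (by omega : ¬(j - (b-1) = l)), if_neg hc]
    ring

lemma P_P (l : ℤ) (h : M K) : P l (P l h) = P l h := by
  funext j a b e; simp only [P]; split_ifs <;> rfl

lemma P_smul (l : ℤ) (c : K) (h : M K) : P l (c • h) = c • P l h := by
  funext j a b e; simp only [P, Pi.smul_apply, smul_eq_mul]
  split_ifs <;> simp

lemma iter_E_P (n : ℕ) (l : ℤ) (h : M K) : E^[n] (P l h) = P (l + n) (E^[n] h) := by
  induction n with
  | zero => simp
  | succ n ih =>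
      rw [Function.iterate_succ_apply', ih, E_P, Function.iterate_succ_apply']
      congr 1
      push_cast; ring

lemma Hw_P (l : ℤ) (h : M K) : Hw (P l h) = ((l : ℤ) : K) • P l h := by
  funext j a b e
  simp only [Hw, P, Pi.smul_apply, smul_eq_mul]
  split_ifs with hc
  · have : ((j:K) - (b:K)) = ((l : ℤ) : K) := by
      rw [← hc]; push_cast; ring
    rw [this]
  · ring

lemma B1 (h : M K) : E (F h) = F (E h) + (2:K) • Hw h := by
  funext j a b e
  simp only [E, F, Hw, Pi.add_apply, Pi.smul_apply, smul_eq_mul]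
  push_cast; ring

lemma B2 (h : M K) : Hw (E h) = E (Hw h) + E h := by
  funext j a b e
  simp only [E, Hw, Pi.add_apply]
  push_cast; ring

lemma EF_iter (n : ℕ) (h : M K) :
    E^[n+1] (F h) = F (E^[n+1] h) + (2*((n:K)+1)) • E^[n] (Hw h)
      + (((n:K)+1)*(n:K)) • E^[n] h := by
  induction n generalizing h with
  | zero => simpa using B1 h
  | succ n ih =>
      have step : E^[n+2] (F h) = E^[n+1] (E (F h)) := by
        rw [← Function.iterate_succ_apply]
      rw [step, B1, iter_E_add, iter_E_smul, ih (E h)]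
      have e1 : E^[n+1] (E h) = E^[n+2] h := by rw [← Function.iterate_succ_apply]
      have e2 : E^[n] (Hw (E h)) = E^[n+1] (Hw h) + E^[n+1] h := by
        rw [B2, iter_E_add]
        simp only [← Function.iterate_succ_apply]
      have e4 : E^[n] (E h) = E^[n+1] h := (Function.iterate_succ_apply E n h).symm
      rw [e1, e2, e4]
      funext j a b e
      simp only [Pi.add_apply, Pi.smul_apply, smul_eq_mul]
      push_cast; ring


lemma VN_E {h : M K} (hh : VN h) : VN (E h) := by
  intro j a b e hneg
  simp only [E]
  rcases hneg with h' | h' | h' | h'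
  · have h1 : h (j-1) (a+1) b e = 0 := hh _ _ _ _ (Or.inl (by omega))
    have h2 : h j (a-1) (b+1) e = 0 := hh _ _ _ _ (Or.inl (by omega))
    rw [h1, h2]; ring
  · have h2 : h j (a-1) (b+1) e = 0 := hh _ _ _ _ (Or.inr (Or.inl (by omega)))
    by_cases ha : a = -1
    · rw [h2, ha]; push_cast; ring
    · have h1 : h (j-1) (a+1) b e = 0 := hh _ _ _ _ (Or.inr (Or.inl (by omega)))
      rw [h1, h2]; ring
  · have h1 : h (j-1) (a+1) b e = 0 := hh _ _ _ _ (Or.inr (Or.inr (Or.inl (by omega))))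
    by_cases hb : b = -1
    · rw [h1, hb]; push_cast; ring
    · have h2 : h j (a-1) (b+1) e = 0 := hh _ _ _ _ (Or.inr (Or.inr (Or.inl (by omega))))
      rw [h1, h2]; ring
  · have h1 : h (j-1) (a+1) b e = 0 := hh _ _ _ _ (Or.inr (Or.inr (Or.inr h')))
    have h2 : h j (a-1) (b+1) e = 0 := hh _ _ _ _ (Or.inr (Or.inr (Or.inr h')))
    rw [h1, h2]; ring

lemma VN_F {h : M K} (hh : VN h) : VN (F h) := by
  intro j a b e hneg
  simp only [F]
  rcases hneg with h' | h' | h' | h'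
  · have h2 : h j (a+1) (b-1) e = 0 := hh _ _ _ _ (Or.inl (by omega))
    by_cases hj : j = -1
    · rw [h2, hj]; push_cast; ring
    · have h1 : h (j+1) (a-1) b e = 0 := hh _ _ _ _ (Or.inl (by omega))
      rw [h1, h2]; ring
  · have h1 : h (j+1) (a-1) b e = 0 := hh _ _ _ _ (Or.inr (Or.inl (by omega)))
    by_cases ha : a = -1
    · rw [h1, ha]; push_cast; ring
    · have h2 : h j (a+1) (b-1) e = 0 := hh _ _ _ _ (Or.inr (Or.inl (by omega)))
      rw [h1, h2]; ring
  · have h1 : h (j+1) (a-1) b e = 0 := hh _ _ _ _ (Or.inr (Or.inr (Or.inl (by omega))))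
    have h2 : h j (a+1) (b-1) e = 0 := hh _ _ _ _ (Or.inr (Or.inr (Or.inl (by omega))))
    rw [h1, h2]; ring
  · have h1 : h (j+1) (a-1) b e = 0 := hh _ _ _ _ (Or.inr (Or.inr (Or.inr h')))
    have h2 : h j (a+1) (b-1) e = 0 := hh _ _ _ _ (Or.inr (Or.inr (Or.inr h')))
    rw [h1, h2]; ring

lemma VN_P {l : ℤ} {h : M K} (hh : VN h) : VN (P l h) := by
  intro j a b e hneg
  simp only [P]
  split_ifs
  · exact hh _ _ _ _ hneg
  · rfl

lemma VN_smul {c : K} {h : M K} (hh : VN h) : VN (c • h) := by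
  intro j a b e hneg
  simp only [Pi.smul_apply, smul_eq_mul, hh _ _ _ _ hneg, mul_zero]

lemma VN_neg {h : M K} (hh : VN h) : VN (-h) := by
  intro j a b e hneg
  simp only [Pi.neg_apply, hh _ _ _ _ hneg, neg_zero]

lemma VN_Dt {h : M K} (hh : VN h) : VN (Dt h) := by
  intro j a b e hneg
  simp only [Dt]
  rcases hneg with h' | h' | h' | h'
  · have h1 : h j (a+1) b e = 0 := hh _ _ _ _ (Or.inl h')
    rw [h1]; ring
  · by_cases ha : a = -1
    · rw [ha]; push_cast; ring
    · have h1 : h j (a+1) b e = 0 := hh _ _ _ _ (Or.inr (Or.inl (by omega)))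
      rw [h1]; ring
  · have h1 : h j (a+1) b e = 0 := hh _ _ _ _ (Or.inr (Or.inr (Or.inl h')))
    rw [h1]; ring
  · have h1 : h j (a+1) b e = 0 := hh _ _ _ _ (Or.inr (Or.inr (Or.inr h')))
    rw [h1]; ring

lemma VN_Dv {h : M K} (hh : VN h) : VN (Dv h) := by
  intro j a b e hneg
  simp only [Dv]
  rcases hneg with h' | h' | h' | h'
  · have h1 : h j a b (e+1) = 0 := hh _ _ _ _ (Or.inl h')
    rw [h1]; ring
  · have h1 : h j a b (e+1) = 0 := hh _ _ _ _ (Or.inr (Or.inl h'))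
    rw [h1]; ring
  · have h1 : h j a b (e+1) = 0 := hh _ _ _ _ (Or.inr (Or.inr (Or.inl h')))
    rw [h1]; ring
  · by_cases he : e = -1
    · rw [he]; push_cast; ring
    · have h1 : h j a b (e+1) = 0 := hh _ _ _ _ (Or.inr (Or.inr (Or.inr (by omega))))
      rw [h1]; ring

lemma Bdd_E {C : ℤ} {h : M K} (hh : Bdd C h) : Bdd C (E h) := by
  intro j a b e hge
  simp only [E]
  have h1 : h (j-1) (a+1) b e = 0 := hh _ _ _ _ (by omega)
  have h2 : h j (a-1) (b+1) e = 0 := hh _ _ _ _ (by omega)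
  rw [h1, h2]; ring

lemma Bdd_F {C : ℤ} {h : M K} (hh : Bdd C h) : Bdd C (F h) := by
  intro j a b e hge
  simp only [F]
  have h1 : h (j+1) (a-1) b e = 0 := hh _ _ _ _ (by omega)
  have h2 : h j (a+1) (b-1) e = 0 := hh _ _ _ _ (by omega)
  rw [h1, h2]; ring

lemma Bdd_P {C l : ℤ} {h : M K} (hh : Bdd C h) : Bdd C (P l h) := by
  intro j a b e hge
  simp only [P]
  split_ifs
  · exact hh _ _ _ _ hge
  · rfl

lemma Bdd_smul {C : ℤ} {c : K} {h : M K} (hh : Bdd C h) : Bdd C (c • h) := by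
  intro j a b e hge
  simp only [Pi.smul_apply, smul_eq_mul, hh _ _ _ _ hge, mul_zero]

lemma Bdd_neg {C : ℤ} {h : M K} (hh : Bdd C h) : Bdd C (-h) := by
  intro j a b e hge
  simp only [Pi.neg_apply, hh _ _ _ _ hge, neg_zero]

lemma Bdd_Dt {C : ℤ} {h : M K} (hh : Bdd C h) : Bdd C (Dt h) := by
  intro j a b e hge
  simp only [Dt]
  have h1 : h j (a+1) b e = 0 := hh _ _ _ _ (by omega)
  rw [h1]; ring

lemma Bdd_Dv {C : ℤ} {h : M K} (hh : Bdd C h) : Bdd C (Dv h) := by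
  intro j a b e hge
  simp only [Dv]
  have h1 : h j a b (e+1) = 0 := hh _ _ _ _ (by omega)
  rw [h1]; ring

/-- The descending sequence used in the master lemma. -/
def Wseq (w : M K) (m : ℤ) (n₀ : ℕ) : ℕ → M K
  | 0 => P (m - n₀) w
  | (k+1) => ((((n₀:ℤ)+k+1) * (2*m - ((n₀:ℤ)+k)) : ℤ) : K)⁻¹ • F (Wseq w m n₀ k)

lemma master {m : ℤ} {n₀ : ℕ} (hn₀ : 1 ≤ n₀) (h2m : 2*m < (n₀:ℤ))
    {r w : M K} {C : ℤ} (hwVN : VN w) (hwB : Bdd C w)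
    (hrw : E^[n₀] w = r) (hPr : P m r = r) (hEr : E r = 0) : r = 0 := by
  have key : ∀ k : ℕ, VN (Wseq w m n₀ k) ∧ Bdd C (Wseq w m n₀ k) ∧
      P (m - n₀ - k) (Wseq w m n₀ k) = Wseq w m n₀ k ∧
      E^[n₀+k] (Wseq w m n₀ k) = r := by
    intro k
    induction k with
    | zero =>
        refine ⟨VN_P hwVN, Bdd_P hwB, ?_, ?_⟩
        · show P (m - n₀ - 0) (P (m - n₀) w) = P (m - n₀) w
          rw [(by ring : m - (n₀:ℤ) - 0 = m - n₀), P_P]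
        · show E^[n₀+0] (P (m - n₀) w) = r
          rw [Nat.add_zero, iter_E_P, (by ring : m - (n₀:ℤ) + n₀ = m), hrw, hPr]
    | succ k ih =>
        obtain ⟨hVNk, hBk, hPk, hEk⟩ := ih
        set N : ℕ := n₀ + k with hN
        set l : ℤ := m - n₀ - k with hl
        set sc : ℤ := ((n₀:ℤ)+k+1) * (2*m - ((n₀:ℤ)+k)) with hsc
        have hscne : (sc : K) ≠ 0 := by
          rw [Int.cast_ne_zero]
          apply mul_ne_zero <;> omega
        have hWsucc : Wseq w m n₀ (k+1) = ((sc : ℤ) : K)⁻¹ • F (Wseq w m n₀ k) := rfl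
        refine ⟨?_, ?_, ?_, ?_⟩
        · rw [hWsucc]; exact VN_smul (VN_F hVNk)
        · rw [hWsucc]; exact Bdd_smul (Bdd_F hBk)
        · rw [hWsucc, P_smul,
            (show m - (n₀:ℤ) - ((k+1:ℕ):ℤ) = l - 1 by omega), ← F_P, hPk]
        · have hHw : Hw (Wseq w m n₀ k) = ((l : ℤ) : K) • Wseq w m n₀ k := by
            conv_lhs => rw [← hPk, Hw_P, hPk]
          have hEN1 : E^[N+1] (Wseq w m n₀ k) = 0 := by
            rw [Function.iterate_succ_apply', hEk, hEr]
          have hkey := EF_iter N (Wseq w m n₀ k)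
          rw [hEN1, F_zero, hHw, iter_E_smul, hEk] at hkey
          have hcomb : E^[N+1] (F (Wseq w m n₀ k)) = ((sc : ℤ) : K) • r := by
            rw [hkey]
            funext j a b e
            simp only [Pi.add_apply, Pi.smul_apply, Pi.zero_apply, smul_eq_mul, hsc, hl, hN]
            push_cast; ring
          have : (n₀ + (k+1) : ℕ) = N + 1 := by omega
          rw [this, hWsucc, iter_E_smul, hcomb, smul_smul, inv_mul_cancel₀ hscne, one_smul]
  -- choose k large enough
  set k : ℕ := (C - n₀ + m).toNat with hk
  obtain ⟨hVNk, hBk, hPk, hEk⟩ := key k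
  have hkge : C - (n₀:ℤ) + m ≤ (k : ℤ) := Int.self_le_toNat _
  have hW0 : Wseq w m n₀ k = 0 := by
    funext j a b e
    by_cases hc : j - b = m - n₀ - k
    · by_cases hneg : j < 0 ∨ a < 0 ∨ b < 0 ∨ e < 0
      · exact hVNk _ _ _ _ hneg
      · push_neg at hneg
        exact hBk _ _ _ _ (by omega)
    · conv_lhs => rw [← hPk]
      simp only [P, if_neg hc, Pi.zero_apply]
  rw [← hEk, hW0, iter_E_zero]


lemma P_zero (l : ℤ) : P l (0 : M K) = 0 := by
  funext j a b e; simp [P]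

lemma E_neg (h : M K) : E (-h) = -(E h) := by
  funext j a b e; simp only [E, Pi.neg_apply]; ring

lemma Dv_zero : Dv (0 : M K) = 0 := by funext j a b e; simp [Dv]
lemma Dt_zero : Dt (0 : M K) = 0 := by funext j a b e; simp [Dt]
lemma Du_zero : Du (0 : M K) = 0 := by funext j a b e; simp [Du]
lemma Ds_zero : Ds (0 : M K) = 0 := by funext j a b e; simp [Ds]

lemma E_Dv (h : M K) : E (Dv h) = Dv (E h) := by
  funext j a b e; simp only [E, Dv]; ring

lemma E_Du (h : M K) : E (Du h) = Du (E h) := by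
  funext j a b e; simp only [E, Du]; ring

lemma E_Dt (h : M K) : E (Dt h) = Dt (E h) - Du h := by
  funext j a b e; simp only [E, Dt, Du, Pi.sub_apply]; push_cast; ring

lemma E_Ds (h : M K) : E (Ds h) = Ds (E h) - Dt h := by
  funext j a b e; simp only [E, Ds, Dt, Pi.sub_apply]; push_cast; ring

theorem core (c : ℤ → ℤ → ℤ → ℤ → ℤ → K) (C : ℤ)
    (hVN : ∀ i j a b e : ℤ, (i < 0 ∨ j < 0 ∨ a < 0 ∨ b < 0 ∨ e < 0) → c i j a b e = 0)
    (hB : ∀ i j a b e : ℤ, C ≤ j + a + b → c i j a b e = 0)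
    (hrec : ∀ i j a b e : ℤ,
      ((j:K)+1) * c (i-3) (j+1) a b e + ((a:K)+1) * c i (j-1) (a+1) b e
      + ((b:K)+1) * c i j (a-1) (b+1) e + ((e:K)+1) * c (i-2) j a b (e+1) = 0) :
    ∀ a b e : ℤ, 0 ≤ a → 0 ≤ b → 0 ≤ e → ¬(a = 0 ∧ b = 0 ∧ e = 0) →
      c 0 0 a b e = 0 := by
  have VNg : ∀ i : ℤ, VN (c i) := fun i j a b e hn => hVN i j a b e (Or.inr hn)
  have Bg : ∀ i : ℤ, Bdd C (c i) := fun i j a b e hg => hB i j a b e hg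
  -- slice equations
  have h0 : E (c 0) = 0 := by
    funext j a b e
    have h := hrec 0 j a b e
    have hT1 : c (0-3) (j+1) a b e = 0 := hVN (0-3) (j+1) a b e (Or.inl (by norm_num))
    have hT4 : c (0-2) j a b (e+1) = 0 := hVN (0-2) j a b (e+1) (Or.inl (by norm_num))
    rw [hT1, hT4] at h
    simp only [E, Pi.zero_apply]
    linear_combination h
  have h1 : E (c 1) = 0 := by
    funext j a b e
    have h := hrec 1 j a b e
    have hT1 : c (1-3) (j+1) a b e = 0 := hVN (1-3) (j+1) a b e (Or.inl (by norm_num))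
    have hT4 : c (1-2) j a b (e+1) = 0 := hVN (1-2) j a b (e+1) (Or.inl (by norm_num))
    rw [hT1, hT4] at h
    simp only [E, Pi.zero_apply]
    linear_combination h
  have hEg2 : E (c 2) = -(Dv (c 0)) := by
    funext j a b e
    have h := hrec 2 j a b e
    have hT1 : c (2-3) (j+1) a b e = 0 := hVN (2-3) (j+1) a b e (Or.inl (by norm_num))
    rw [hT1] at h
    norm_num at h
    simp only [E, Dv, Pi.neg_apply]
    linear_combination h
  have hEg3 : E (c 3) = -(Ds (c 0)) - Dv (c 1) := by
    funext j a b e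
    have h := hrec 3 j a b e
    norm_num at h
    simp only [E, Ds, Dv, Pi.sub_apply, Pi.neg_apply]
    linear_combination h
  -- claim 1 : u-exponent positive
  have claim1 : ∀ a b e : ℤ, 1 ≤ b → c 0 0 a b e = 0 := by
    intro a b e hb
    have h := congrFun (congrFun (congrFun (congrFun h0 0) (a+1)) (b-1)) e
    simp only [E, Pi.zero_apply] at h
    have hT1 : c 0 (0-1) (a+1+1) (b-1) e = 0 := VNg 0 (0-1) (a+1+1) (b-1) e (Or.inl (by norm_num))
    rw [hT1] at h
    have harith : (a + 1 - 1 : ℤ) = a := by ring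
    have harith2 : (b - 1 + 1 : ℤ) = b := by ring
    rw [harith, harith2] at h
    have hbK : ((b:K)) ≠ 0 := Int.cast_ne_zero.mpr (by omega)
    have h' : (b:K) * c 0 0 a b e = 0 := by push_cast at h ⊢; linear_combination h
    exact (mul_eq_zero.mp h').resolve_left hbK
  -- claim 2 : v-exponent positive
  have claim2 : ∀ a b e : ℤ, 0 ≤ b → 1 ≤ e → c 0 0 a b e = 0 := by
    intro a b e hb he
    set q : M K := Dv (c 0) with hq
    have hEq : E q = 0 := by rw [hq, E_Dv, h0, Dv_zero]
    set w : M K := P (-b-1) (-(c 2)) with hw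
    set r : M K := P (-b) q with hr
    have hrw : E^[1] w = r := by
      rw [Function.iterate_one, hw, E_P, E_neg, hEg2, neg_neg]
      rw [(show (-b-1+1 : ℤ) = -b by ring)]
    have hPr : P (-b) r = r := by rw [hr, P_P]
    have hEr : E r = 0 := by rw [hr, E_P, hEq, P_zero]
    have hr0 : r = 0 := master (le_refl 1) (by push_cast; omega)
      (VN_P (VN_neg (VNg 2))) (Bdd_P (Bdd_neg (Bg 2))) hrw hPr hEr
    have hv := congrFun (congrFun (congrFun (congrFun hr0 0) a) b) (e-1)
    simp only [hr, P, q, Dv, Pi.zero_apply] at hv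
    rw [if_pos (by omega : (0:ℤ) - b = -b)] at hv
    have harith : (e - 1 + 1 : ℤ) = e := by ring
    rw [harith] at hv
    have heK : ((e:K)) ≠ 0 := Int.cast_ne_zero.mpr (by omega)
    have h' : (e:K) * c 0 0 a b e = 0 := by push_cast at hv ⊢; linear_combination hv
    exact (mul_eq_zero.mp h').resolve_left heK
  -- claim 3 : t-exponent positive, u-exponent zero
  have claim3 : ∀ a e : ℤ, 1 ≤ a → c 0 0 a 0 e = 0 := by
    intro a e ha
    set q : M K := Dt (c 0) with hq
    have hEq : E q = -(Du (c 0)) := by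
      rw [hq, E_Dt, h0, Dt_zero]
      funext j a' b' e'
      simp
    have hEEq : E (E q) = 0 := by
      rw [hEq, E_neg, E_Du, h0, Du_zero, neg_zero]
    have hqE2 : q = E (E (c 3)) := by
      rw [hEg3, hq]
      have e1 : E (-(Ds (c 0)) - Dv (c 1)) = E (-(Ds (c 0))) + E (-(Dv (c 1))) := by
        rw [(show -(Ds (c 0)) - Dv (c 1) = -(Ds (c 0)) + -(Dv (c 1)) by abel), E_add]
      rw [e1, E_neg, E_neg, E_Ds, E_Dv, h0, h1, Ds_zero, Dv_zero]
      funext j a' b' e'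
      simp
    -- step 1 : E (P 0 q) = 0
    set r : M K := P 1 (E q) with hrdef
    have hrw : E^[3] (P (-2) (c 3)) = r := by
      have h3 : E^[3] (c 3) = E (E (E (c 3))) := rfl
      rw [iter_E_P, hrdef, hqE2, (show (-2 + ((3:ℕ):ℤ)) = 1 by norm_num), h3]
    have hPr : P 1 r = r := by rw [hrdef, P_P]
    have hEr : E r = 0 := by rw [hrdef, E_P, hEEq, P_zero]
    have hr0 : r = 0 := master (by norm_num) (by norm_num)
      (VN_P (VNg 3)) (Bdd_P (Bg 3)) hrw hPr hEr
    set q0 : M K := P 0 q with hq0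
    have hEq0 : E q0 = 0 := by
      rw [hq0, E_P]
      rw [(show (0+1 : ℤ) = 1 by norm_num), ← hrdef, hr0]
    -- step 2 : q0 = 0
    have hq0w : E^[1] (E (P (-2) (c 3))) = q0 := by
      rw [Function.iterate_one, hq0, hqE2]
      rw [(show P (0:ℤ) (E (E (c 3))) = P (-1+1) (E (E (c 3))) by norm_num), ← E_P]
      rw [(show P (-1:ℤ) (E (c 3)) = P (-2+1) (E (c 3)) by norm_num), ← E_P]
    have hPq0 : P 0 q0 = q0 := by rw [hq0, P_P]
    have hq00 : q0 = 0 := master (le_refl 1) (by norm_num)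
      (VN_E (VN_P (VNg 3))) (Bdd_E (Bdd_P (Bg 3))) hq0w hPq0 hEq0
    have hv := congrFun (congrFun (congrFun (congrFun hq00 0) (a-1)) 0) e
    simp only [hq0, P, q, Dt, Pi.zero_apply] at hv
    rw [if_pos (by omega : (0:ℤ) - 0 = 0)] at hv
    have harith : (a - 1 + 1 : ℤ) = a := by ring
    rw [harith] at hv
    have haK : ((a:K)) ≠ 0 := Int.cast_ne_zero.mpr (by omega)
    have h' : (a:K) * c 0 0 a 0 e = 0 := by push_cast at hv ⊢; linear_combination hv
    exact (mul_eq_zero.mp h').resolve_left haK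
  -- assemble
  intro a b e ha hb he hne
  rcases lt_or_eq_of_le hb with hb1 | hb0
  · exact claim1 a b e (by omega)
  · rcases lt_or_eq_of_le he with he1 | he0
    · exact claim2 a b e hb (by omega)
    · have ha1 : 1 ≤ a := by omega
      rw [← hb0, ← he0]
      exact claim3 a 0 ha1

end DF



namespace DFP

variable {K : Type*} [Field K] [CharZero K]

noncomputable def mono (i j a b e : ℕ) : Fin 5 →₀ ℕ :=
  Finsupp.single 0 i + Finsupp.single 1 j + Finsupp.single 2 a
    + Finsupp.single 3 b + Finsupp.single 4 e

lemma mono_apply (i j a b e : ℕ) (x : Fin 5) :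
    mono i j a b e x = ![i, j, a, b, e] x := by
  fin_cases x <;> simp [mono, Finsupp.single_apply]

lemma mono_eq_self (μ : Fin 5 →₀ ℕ) : mono (μ 0) (μ 1) (μ 2) (μ 3) (μ 4) = μ := by
  ext x
  rw [mono_apply]
  fin_cases x <;> rfl

lemma mono_add_single (i j a b e : ℕ) :
    (mono i j a b e + Finsupp.single 0 1 = mono (i+1) j a b e)
    ∧ (mono i j a b e + Finsupp.single 1 1 = mono i (j+1) a b e)
    ∧ (mono i j a b e + Finsupp.single 2 1 = mono i j (a+1) b e)
    ∧ (mono i j a b e + Finsupp.single 3 1 = mono i j a (b+1) e)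
    ∧ (mono i j a b e + Finsupp.single 4 1 = mono i j a b (e+1)) := by
  refine ⟨?_, ?_, ?_, ?_, ?_⟩ <;>
    (ext x; fin_cases x <;> simp [mono, Finsupp.single_apply])

lemma mono_sub_single (i j a b e : ℕ) :
    (∀ k, mono i j a b e - Finsupp.single 0 k = mono (i - k) j a b e)
    ∧ (∀ k, mono i j a b e - Finsupp.single 1 k = mono i (j - k) a b e)
    ∧ (∀ k, mono i j a b e - Finsupp.single 2 k = mono i j (a - k) b e) := by
  refine ⟨?_, ?_, ?_⟩ <;> (intro k; ext x; fin_cases x <;>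
    simp [Finsupp.tsub_apply, mono, Finsupp.single_apply])

lemma single_le_mono (i j a b e : ℕ) (k : ℕ) :
    (Finsupp.single (0 : Fin 5) k ≤ mono i j a b e ↔ k ≤ i)
    ∧ (Finsupp.single (1 : Fin 5) k ≤ mono i j a b e ↔ k ≤ j)
    ∧ (Finsupp.single (2 : Fin 5) k ≤ mono i j a b e ↔ k ≤ a) := by
  refine ⟨?_, ?_, ?_⟩ <;> (rw [Finsupp.single_le_iff]; simp [mono_apply])

/-- coefficient of a partial derivative -/
lemma coeff_pderiv (s : Fin 5) (μ : Fin 5 →₀ ℕ) (p : MvPolynomial (Fin 5) K) :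
    coeff μ (pderiv s p) = ((μ s : K) + 1) * coeff (μ + Finsupp.single s 1) p := by
  induction p using MvPolynomial.induction_on' with
  | monomial ν r =>
      rw [pderiv_monomial, coeff_monomial, coeff_monomial]
      by_cases hc : ν = μ + Finsupp.single s 1
      · subst hc
        rw [if_pos (by rw [add_tsub_cancel_right]), if_pos rfl]
        have h2 : ((μ + Finsupp.single s 1 : Fin 5 →₀ ℕ)) s = μ s + 1 := by
          rw [Finsupp.add_apply, Finsupp.single_eq_same]
        rw [h2]
        push_cast
        ring
      · rw [if_neg hc]
        by_cases hz : ν s = 0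
        · split_ifs with h2
          · simp [hz]
          · ring
        · have : ¬ (ν - Finsupp.single s 1 = μ) := by
            intro h
            apply hc
            rw [← h]
            ext x
            simp only [Finsupp.add_apply, Finsupp.tsub_apply, Finsupp.single_apply]
            by_cases hx : s = x
            · subst hx; simp; omega
            · simp [hx]
          rw [if_neg this]
          ring
  | add p q hp hq =>
      simp only [map_add, coeff_add, hp, hq]
      ring


noncomputable def czf (f : MvPolynomial (Fin 5) K) : ℤ → ℤ → ℤ → ℤ → ℤ → K :=
  fun i j a b e =>
  if 0 ≤ i ∧ 0 ≤ j ∧ 0 ≤ a ∧ 0 ≤ b ∧ 0 ≤ e then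
    coeff (mono i.toNat j.toNat a.toNat b.toNat e.toNat) f else 0

lemma czf_nonneg (f : MvPolynomial (Fin 5) K) (i j a b e : ℕ) :
    czf f i j a b e = coeff (mono i j a b e) f := by
  rw [czf, if_pos (by omega)]
  simp

lemma czf_neg (f : MvPolynomial (Fin 5) K) {i j a b e : ℤ}
    (h : i < 0 ∨ j < 0 ∨ a < 0 ∨ b < 0 ∨ e < 0) : czf f i j a b e = 0 := by
  rw [czf, if_neg (by omega)]

lemma term1 (f : MvPolynomial (Fin 5) K) (i j a b e : ℕ) :
    coeff (mono i j a b e) (X 0 ^ 3 * pderiv 1 f)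
      = ((j:K)+1) * czf f ((i:ℤ)-3) ((j:ℤ)+1) a b e := by
  rw [X_pow_eq_monomial, coeff_monomial_mul']
  by_cases h : 3 ≤ i
  · rw [if_pos (((single_le_mono i j a b e 3).1).mpr h)]
    rw [(mono_sub_single i j a b e).1 3, coeff_pderiv, (mono_add_single (i-3) j a b e).2.1,
      one_mul, mono_apply]
    rw [(show ((i:ℤ) - 3) = ((i - 3 : ℕ) : ℤ) by omega),
      (show ((j:ℤ) + 1) = ((j + 1 : ℕ) : ℤ) by omega), czf_nonneg]
    norm_num
  · rw [if_neg (fun hc => h (((single_le_mono i j a b e 3).1).mp hc)),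
      czf_neg f (Or.inl (by omega))]
    ring

lemma term2 (f : MvPolynomial (Fin 5) K) (i j a b e : ℕ) :
    coeff (mono i j a b e) (X 1 * pderiv 2 f)
      = ((a:K)+1) * czf f i ((j:ℤ)-1) ((a:ℤ)+1) b e := by
  rw [(show (X 1 : MvPolynomial (Fin 5) K) = X 1 ^ 1 by ring), X_pow_eq_monomial,
    coeff_monomial_mul']
  by_cases h : 1 ≤ j
  · rw [if_pos (((single_le_mono i j a b e 1).2.1).mpr h)]
    rw [(mono_sub_single i j a b e).2.1 1, coeff_pderiv, (mono_add_single i (j-1) a b e).2.2.1,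
      one_mul, mono_apply]
    rw [(show ((j:ℤ) - 1) = ((j - 1 : ℕ) : ℤ) by omega),
      (show ((a:ℤ) + 1) = ((a + 1 : ℕ) : ℤ) by omega), czf_nonneg]
    norm_num; exact Or.inl rfl
  · rw [if_neg (fun hc => h (((single_le_mono i j a b e 1).2.1).mp hc)),
      czf_neg f (Or.inr (Or.inl (by omega)))]
    ring

lemma term3 (f : MvPolynomial (Fin 5) K) (i j a b e : ℕ) :
    coeff (mono i j a b e) (X 2 * pderiv 3 f)
      = ((b:K)+1) * czf f i j ((a:ℤ)-1) ((b:ℤ)+1) e := by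
  rw [(show (X 2 : MvPolynomial (Fin 5) K) = X 2 ^ 1 by ring), X_pow_eq_monomial,
    coeff_monomial_mul']
  by_cases h : 1 ≤ a
  · rw [if_pos (((single_le_mono i j a b e 1).2.2).mpr h)]
    rw [(mono_sub_single i j a b e).2.2 1, coeff_pderiv, (mono_add_single i j (a-1) b e).2.2.2.1,
      one_mul, mono_apply]
    rw [(show ((a:ℤ) - 1) = ((a - 1 : ℕ) : ℤ) by omega),
      (show ((b:ℤ) + 1) = ((b + 1 : ℕ) : ℤ) by omega), czf_nonneg]
    norm_num; exact Or.inl rfl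
  · rw [if_neg (fun hc => h (((single_le_mono i j a b e 1).2.2).mp hc)),
      czf_neg f (Or.inr (Or.inr (Or.inl (by omega))))]
    ring

lemma term4 (f : MvPolynomial (Fin 5) K) (i j a b e : ℕ) :
    coeff (mono i j a b e) (X 0 ^ 2 * pderiv 4 f)
      = ((e:K)+1) * czf f ((i:ℤ)-2) j a b ((e:ℤ)+1) := by
  rw [X_pow_eq_monomial, coeff_monomial_mul']
  by_cases h : 2 ≤ i
  · rw [if_pos (((single_le_mono i j a b e 2).1).mpr h)]
    rw [(mono_sub_single i j a b e).1 2, coeff_pderiv, (mono_add_single (i-2) j a b e).2.2.2.2,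
      one_mul, mono_apply]
    rw [(show ((i:ℤ) - 2) = ((i - 2 : ℕ) : ℤ) by omega),
      (show ((e:ℤ) + 1) = ((e + 1 : ℕ) : ℤ) by omega), czf_nonneg]
    norm_num; exact Or.inl rfl
  · rw [if_neg (fun hc => h (((single_le_mono i j a b e 2).1).mp hc)),
      czf_neg f (Or.inl (by omega))]
    ring

lemma mono_sum (i j a b e : ℕ) :
    ((mono i j a b e).sum fun _ n => n) = i + j + a + b + e := by
  rw [mono]
  rw [Finsupp.sum_add_index' (fun _ => rfl) (fun _ _ _ => rfl)]
  rw [Finsupp.sum_add_index' (fun _ => rfl) (fun _ _ _ => rfl)]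
  rw [Finsupp.sum_add_index' (fun _ => rfl) (fun _ _ _ => rfl)]
  rw [Finsupp.sum_add_index' (fun _ => rfl) (fun _ _ _ => rfl)]
  rw [Finsupp.sum_single_index rfl, Finsupp.sum_single_index rfl, Finsupp.sum_single_index rfl,
    Finsupp.sum_single_index rfl, Finsupp.sum_single_index rfl]

lemma czf_bdd (f : MvPolynomial (Fin 5) K) :
    ∀ i j a b e : ℤ, ((f.totalDegree : ℤ) + 1) ≤ j + a + b → czf f i j a b e = 0 := by
  intro i j a b e hge
  by_cases hneg : i < 0 ∨ j < 0 ∨ a < 0 ∨ b < 0 ∨ e < 0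
  · exact czf_neg f hneg
  · push_neg at hneg
    obtain ⟨hi, hj, ha, hb, he⟩ := hneg
    lift i to ℕ using hi; lift j to ℕ using hj; lift a to ℕ using ha
    lift b to ℕ using hb; lift e to ℕ using he
    rw [czf_nonneg]
    by_contra hne
    have hmem : mono i j a b e ∈ f.support := mem_support_iff.mpr hne
    have := le_totalDegree hmem
    rw [mono_sum] at this
    omega

lemma mem_span_of_coeff (p : MvPolynomial (Fin 5) K)
    (h : ∀ μ : Fin 5 →₀ ℕ, μ 0 = 0 → μ 1 = 0 → coeff μ p = 0) :
    p ∈ Ideal.span ({X 0, X 1} : Set (MvPolynomial (Fin 5) K)) := by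
  rw [p.as_sum]
  apply Ideal.sum_mem
  intro μ hμ
  by_cases h0 : μ 0 = 0
  · by_cases h1 : μ 1 = 0
    · rw [h μ h0 h1, map_zero]
      exact Ideal.zero_mem _
    · have hds : μ = Finsupp.single 1 1 + (μ - Finsupp.single 1 1) := by
        ext x
        simp only [Finsupp.add_apply, Finsupp.tsub_apply, Finsupp.single_apply]
        by_cases hx : (1 : Fin 5) = x
        · subst hx; simp; omega
        · simp [hx]
      rw [hds, monomial_single_add]
      exact Ideal.mul_mem_right _ _ (Ideal.subset_span (by simp))
  · have hds : μ = Finsupp.single 0 1 + (μ - Finsupp.single 0 1) := by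
      ext x
      simp only [Finsupp.add_apply, Finsupp.tsub_apply, Finsupp.single_apply]
      by_cases hx : (0 : Fin 5) = x
      · subst hx; simp; omega
      · simp [hx]
    rw [hds, monomial_single_add]
    exact Ideal.mul_mem_right _ _ (Ideal.subset_span (by simp))

end DFP


section Main


theorem daigle_freudenburg_kernel_in_ideal
    (K : Type*) [Field K] [CharZero K]
    (D : Derivation K (MvPolynomial (Fin 5) K) (MvPolynomial (Fin 5) K))
    (hx : D (X 0) = 0) (hs : D (X 1) = X 0 ^ 3) (ht : D (X 2) = X 1)
    (hu : D (X 3) = X 2) (hv : D (X 4) = X 0 ^ 2) :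
    ∀ f : MvPolynomial (Fin 5) K, D f = 0 →
      ∃ c : K, f - C c ∈ Ideal.span ({X 0, X 1} : Set (MvPolynomial (Fin 5) K)) := by
  intro f hf
  have hDeq : ∀ p : MvPolynomial (Fin 5) K, D p =
      X 0 ^ 3 * pderiv 1 p + X 1 * pderiv 2 p + X 2 * pderiv 3 p + X 0 ^ 2 * pderiv 4 p := by
    have : D = ((X 0 ^ 3 : MvPolynomial (Fin 5) K) • pderiv 1 + (X 1 : MvPolynomial (Fin 5) K) • pderiv 2 + (X 2 : MvPolynomial (Fin 5) K) • pderiv 3 + (X 0 ^ 2 : MvPolynomial (Fin 5) K) • pderiv 4 :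
        Derivation K (MvPolynomial (Fin 5) K) (MvPolynomial (Fin 5) K)) := by
      apply MvPolynomial.derivation_ext
      intro i
      fin_cases i <;>
        simp (config := { decide := true }) [hx, hs, ht, hu, hv, pderiv_X, Pi.single_apply,
          Fin.ext_iff]
    intro p
    rw [this]
    simp [smul_eq_mul]
  -- the recurrence for the coefficient function
  have hrec : ∀ i j a b e : ℤ,
      ((j:K)+1) * DFP.czf f (i-3) (j+1) a b e + ((a:K)+1) * DFP.czf f i (j-1) (a+1) b e
      + ((b:K)+1) * DFP.czf f i j (a-1) (b+1) e + ((e:K)+1) * DFP.czf f (i-2) j a b (e+1)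
        = 0 := by
    intro i j a b e
    by_cases hneg : i < 0 ∨ j < 0 ∨ a < 0 ∨ b < 0 ∨ e < 0
    · rcases hneg with h' | h' | h' | h' | h'
      · rw [DFP.czf_neg f (Or.inl (by omega)), DFP.czf_neg f (Or.inl (by omega)),
          DFP.czf_neg f (Or.inl (by omega)), DFP.czf_neg f (Or.inl (by omega))]
        ring
      · rw [DFP.czf_neg f (Or.inr (Or.inl (by omega : j - 1 < 0))),
          DFP.czf_neg f (Or.inr (Or.inl h')), DFP.czf_neg f (Or.inr (Or.inl h'))]
        by_cases hj : j = -1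
        · rw [hj]; push_cast; ring
        · rw [DFP.czf_neg f (Or.inr (Or.inl (by omega : j + 1 < 0)))]; ring
      · rw [DFP.czf_neg f (Or.inr (Or.inr (Or.inl h'))),
          DFP.czf_neg f (Or.inr (Or.inr (Or.inl (by omega : a - 1 < 0)))),
          DFP.czf_neg f (Or.inr (Or.inr (Or.inl h')))]
        by_cases ha : a = -1
        · rw [ha]; push_cast; ring
        · rw [DFP.czf_neg f (Or.inr (Or.inr (Or.inl (by omega : a + 1 < 0))))]; ring
      · rw [DFP.czf_neg f (Or.inr (Or.inr (Or.inr (Or.inl h')))),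
          DFP.czf_neg f (Or.inr (Or.inr (Or.inr (Or.inl h')))),
          DFP.czf_neg f (Or.inr (Or.inr (Or.inr (Or.inl h'))))]
        by_cases hb : b = -1
        · rw [hb]; push_cast; ring
        · rw [DFP.czf_neg f (Or.inr (Or.inr (Or.inr (Or.inl (by omega : b + 1 < 0)))))]; ring
      · rw [DFP.czf_neg f (Or.inr (Or.inr (Or.inr (Or.inr h')))),
          DFP.czf_neg f (Or.inr (Or.inr (Or.inr (Or.inr h')))),
          DFP.czf_neg f (Or.inr (Or.inr (Or.inr (Or.inr h'))))]
        by_cases he : e = -1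
        · rw [he]; push_cast; ring
        · rw [DFP.czf_neg f (Or.inr (Or.inr (Or.inr (Or.inr (by omega : e + 1 < 0)))))]; ring
    · push_neg at hneg
      obtain ⟨hi, hj, ha, hb, he⟩ := hneg
      lift i to ℕ using hi; lift j to ℕ using hj; lift a to ℕ using ha
      lift b to ℕ using hb; lift e to ℕ using he
      have hsum : ((j:K)+1) * DFP.czf f ((i:ℤ)-3) ((j:ℤ)+1) a b e
          + ((a:K)+1) * DFP.czf f i ((j:ℤ)-1) ((a:ℤ)+1) b e
          + ((b:K)+1) * DFP.czf f i j ((a:ℤ)-1) ((b:ℤ)+1) e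
          + ((e:K)+1) * DFP.czf f ((i:ℤ)-2) j a b ((e:ℤ)+1)
          = coeff (DFP.mono i j a b e)
              (X 0 ^ 3 * pderiv 1 f + X 1 * pderiv 2 f + X 2 * pderiv 3 f
                + X 0 ^ 2 * pderiv 4 f) := by
        rw [coeff_add, coeff_add, coeff_add, DFP.term1, DFP.term2, DFP.term3, DFP.term4]
      push_cast
      rw [hsum, ← hDeq, hf, coeff_zero]
  refine ⟨coeff 0 f, DFP.mem_span_of_coeff _ ?_⟩
  intro μ h0 h1
  rw [coeff_sub]
  by_cases hμ : μ = 0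
  · subst hμ
    simp [coeff_C]
  · have hC : coeff μ (C (coeff 0 f) : MvPolynomial (Fin 5) K) = 0 := by
      rw [coeff_C, if_neg (fun hc => hμ hc.symm)]
    rw [hC, sub_zero]
    have hcan : μ = DFP.mono 0 0 (μ 2) (μ 3) (μ 4) := by
      conv_lhs => rw [← DFP.mono_eq_self μ]
      rw [h0, h1]
    have hne : ¬((μ 2 : ℤ) = 0 ∧ (μ 3 : ℤ) = 0 ∧ (μ 4 : ℤ) = 0) := by
      rintro ⟨h2, h3, h4⟩
      apply hμ
      have h2' : μ 2 = 0 := by exact_mod_cast h2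
      have h3' : μ 3 = 0 := by exact_mod_cast h3
      have h4' : μ 4 = 0 := by exact_mod_cast h4
      rw [hcan, h2', h3', h4']
      ext x
      rw [DFP.mono_apply]
      fin_cases x <;> rfl
    have hcore := DF.core (DFP.czf f) ((f.totalDegree : ℤ) + 1)
      (fun i j a b e h => DFP.czf_neg f h) (fun i j a b e h => DFP.czf_bdd f i j a b e h) hrec
      (μ 2) (μ 3) (μ 4) (Int.natCast_nonneg _) (Int.natCast_nonneg _) (Int.natCast_nonneg _) hne
    rw [hcan, ← DFP.czf_nonneg]
    exact_mod_cast hcore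

end Main
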